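/- Let (a_n)_{n≥1} be positive real numbers with a_n > Σ_{m>n} a_m for every n ≥ 1, set τ_n := Σ_{m>n} a_m, and assume 2^n·(log(1/τ_n))^(−s) → 0 as n → ∞ for every s > 0. Let K := {Σ_{n=1}^∞ ε_n·a_n : ε_n ∈ {0,1} for all n}. Then for every s > 0 the generalized Hausdorff measure H^{h_s}(K) with gauge h_s(r) = (log(1/r))^(−s) equals 0; that is, K has logarithmic Hausdorff dimension 0. -/

import Mathlib

open Filter Set Metric Pointwise

/-- The gauge `h_s(r) = (log(1/r))^(-s)` as a function `ℝ≥0∞ → ℝ≥0∞`, used to build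
the generalized (logarithmic) Hausdorff measure via Carathéodory's metric construction. -/
noncomputable def hGauge (s : ℝ) : ENNReal → ENNReal :=
  fun r => ENNReal.ofReal ((Real.log (1 / r.toReal)) ^ (-s))

/-- For positive `a n` with `a n > τ n := Σ_{m>n} a m` and
`2^n (log(1/τ n))^{-s} → 0` for every `s > 0`, the Cantor set
`K = {Σ ε_n a_n : ε ∈ {0,1}^ℕ}` satisfies `H^{h_s}(K) = 0` for every `s > 0`;
that is, `K` has logarithmic Hausdorff dimension zero. -/
theorem sumset_cantor_log_dim_zero
    (a : ℕ → ℝ) (hpos : ∀ n, 0 < a n) (hsum : Summable a)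
    (hsep : ∀ n, (∑' m, a (m + n + 1)) < a n)
    (hτ : ∀ s : ℝ, 0 < s →
      Tendsto (fun n : ℕ => (2 : ℝ) ^ n * (Real.log (1 / (∑' m, a (m + n + 1)))) ^ (-s))
        atTop (nhds 0))
    (K : Set ℝ)
    (hK : K = {x : ℝ | ∃ ε : ℕ → Bool, x = ∑' n, (if ε n then a n else 0)}) :
    ∀ s : ℝ, 0 < s → MeasureTheory.Measure.mkMetric (hGauge s) K = 0 := by
  intro s hs
  set τ : ℕ → ℝ := fun n => ∑' m, a (m + n + 1) with hτdef
  -- tails are summable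
  have hsumtail : ∀ n : ℕ, Summable (fun m => a (m + n)) := fun n =>
    (summable_nat_add_iff n).2 hsum
  have hτ0 : ∀ n, 0 ≤ τ n := fun n =>
    tsum_nonneg fun m => (hpos _).le
  -- τ → 0
  have hτ_tendsto : Tendsto τ atTop (nhds 0) := by
    have h1 : Tendsto (fun n : ℕ => ∑' m, a (m + n)) atTop (nhds 0) :=
      tendsto_sum_nat_add a
    have h2 : Tendsto (fun n : ℕ => n + 1) atTop atTop := tendsto_add_atTop_nat 1
    have := h1.comp h2
    refine this.congr fun n => ?_
    simp only [Function.comp]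
    exact tsum_congr fun m => by ring_nf
  -- the covering sets
  open Fin.NatCast in set c : ∀ n : ℕ, (Fin (n + 1) → Bool) → ℝ := fun n ε =>
    ∑ i ∈ Finset.range (n + 1), (if ε i then a i else 0) with hcdef
  set t : ∀ n : ℕ, (Fin (n + 1) → Bool) → Set ℝ := fun n ε =>
    Set.Icc (c n ε) (c n ε + τ n) with htdef
  have hdiam : ∀ n ε, EMetric.diam (t n ε) = ENNReal.ofReal (τ n) := by
    intro n ε
    rw [htdef]
    show Metric.ediam _ = _
    simp [Real.ediam_Icc]
  -- covering
  have hcover : ∀ n : ℕ, K ⊆ ⋃ ε : Fin (n + 1) → Bool, t n ε := by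
    intro n x hx
    rw [hK] at hx
    obtain ⟨ε, rfl⟩ := hx
    set g : ℕ → ℝ := fun i => if ε i then a i else 0 with hgdef
    have hg0 : ∀ i, 0 ≤ g i := fun i => by
      by_cases h : ε i <;> simp [hgdef, h, (hpos i).le]
    have hgle : ∀ i, g i ≤ a i := fun i => by
      by_cases h : ε i <;> simp [hgdef, h, (hpos i).le]
    have hgsum : Summable g := hsum.of_nonneg_of_le hg0 hgle
    refine Set.mem_iUnion.2 ⟨fun i : Fin (n + 1) => ε i, ?_⟩
    have hsplit : ∑' i, g i =
        ∑ i ∈ Finset.range (n + 1), g i + ∑' m, g (m + (n + 1)) :=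
      (Summable.sum_add_tsum_nat_add (n + 1) hgsum).symm
    have hcval : c n (fun i : Fin (n + 1) => ε i) = ∑ i ∈ Finset.range (n + 1), g i := by
      rw [hcdef]
      refine Finset.sum_congr rfl fun i hi => ?_
      simp [Finset.mem_range] at hi
      simp only [hgdef, Fin.val_natCast, Nat.mod_eq_of_lt (Nat.lt_succ_of_le hi)]
    have htail0 : 0 ≤ ∑' m, g (m + (n + 1)) :=
      tsum_nonneg fun m => hg0 _
    have htailτ : (∑' m, g (m + (n + 1))) ≤ τ n := by
      rw [hτdef]
      have : ∀ m, g (m + (n + 1)) ≤ a (m + n + 1) := fun m => by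
        have := hgle (m + (n + 1)); rwa [← add_assoc] at this
      refine Summable.tsum_le_tsum this ?_ ?_
      · exact (summable_nat_add_iff (n + 1)).2 hgsum
      · exact (summable_nat_add_iff (n + 1)).2 hsum |>.congr fun m => by rw [add_assoc]
    constructor
    · rw [hsplit, hcval]; linarith
    · rw [hsplit, hcval]; linarith
  -- apply the general bound
  have hbound := MeasureTheory.Measure.mkMetric_le_liminf_sum K
    (fun n => ENNReal.ofReal (τ n))
    (by
      rw [← ENNReal.ofReal_zero]
      exact (ENNReal.continuous_ofReal.tendsto 0).comp hτ_tendsto)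
    t
    (Eventually.of_forall fun n i => le_of_eq (hdiam n i))
    (Eventually.of_forall hcover)
    (hGauge s)
  -- compute the sums
  have hsum_eq : ∀ n : ℕ, (∑ ε : Fin (n + 1) → Bool, hGauge s (EMetric.diam (t n ε)))
      = ENNReal.ofReal ((2 : ℝ) ^ (n + 1) * (Real.log (1 / τ n)) ^ (-s)) := by
    intro n
    have : ∀ ε : Fin (n + 1) → Bool, hGauge s (EMetric.diam (t n ε))
        = ENNReal.ofReal ((Real.log (1 / τ n)) ^ (-s)) := by
      intro ε
      rw [hdiam n ε, hGauge]
      congr 2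
      rw [ENNReal.toReal_ofReal (hτ0 n)]
    rw [Finset.sum_congr rfl fun ε _ => this ε, Finset.sum_const]
    have hcard : (Finset.univ : Finset (Fin (n + 1) → Bool)).card = 2 ^ (n + 1) := by
      simp [Finset.card_univ]
    rw [hcard, nsmul_eq_mul]
    rw [← ENNReal.ofReal_natCast, ← ENNReal.ofReal_mul (by positivity)]
    congr 1
    push_cast
    ring
  -- the RHS tends to 0
  have hlim : Tendsto (fun n : ℕ =>
      ENNReal.ofReal ((2 : ℝ) ^ (n + 1) * (Real.log (1 / τ n)) ^ (-s))) atTop (nhds 0) := by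
    rw [← ENNReal.ofReal_zero]
    apply ENNReal.continuous_ofReal.tendsto 0 |>.comp
    have h2 : Tendsto (fun n : ℕ => 2 * ((2 : ℝ) ^ n * (Real.log (1 / τ n)) ^ (-s)))
        atTop (nhds (2 * 0)) := (hτ s hs).const_mul 2
    rw [mul_zero] at h2
    exact h2.congr fun n => by ring
  have hliminf : Filter.liminf (fun n : ℕ =>
      ∑ ε : Fin (n + 1) → Bool, hGauge s (EMetric.diam (t n ε))) atTop = 0 := by
    have : Filter.liminf (fun n : ℕ =>
        ENNReal.ofReal ((2 : ℝ) ^ (n + 1) * (Real.log (1 / τ n)) ^ (-s))) atTop = 0 :=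
      hlim.liminf_eq
    rw [← this]
    exact Filter.liminf_congr (Eventually.of_forall hsum_eq)
  exact le_antisymm (hliminf ▸ hbound) zero_le
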